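/- Let G be a finite group, p a prime, P a Sylow p-subgroup of G, and suppose [P,P] is contained in a normal p-subgroup N of G. If p divides |G|, then G contains a non-Schur p-element. -/

import Mathlib

open Subgroup
open scoped commutatorElement

lemma aux_transfer {H : Type*} [Group H] [Finite H] {p : ℕ} [hp : Fact p.Prime]
    (Q : Sylow p H) {x : H} (hc : ∀ g : H, g * x = x * g)
    (hxp : ∃ n : ℕ, orderOf x = p ^ n)
    (hx : x ∈ commutator H) : x ∈ ⁅(Q : Subgroup H), (Q : Subgroup H)⁆ := by
  obtain ⟨n, hn⟩ := hxp
  by_cases hx1 : x = 1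
  · subst hx1; exact Subgroup.one_mem _
  set ι := (Q : Subgroup H).index with hι
  have key : ∀ (k : ℕ) (g₀ : H), g₀⁻¹ * x ^ k * g₀ ∈ (Q : Subgroup H) →
      g₀⁻¹ * x ^ k * g₀ = x ^ k := by
    intro k g₀ _
    have h : Commute g₀ (x ^ k) := (show Commute g₀ x from hc g₀).pow_right k
    rw [h.inv_left.eq, mul_assoc, inv_mul_cancel, mul_one]
  set ϕ : (Q : Subgroup H) →* Abelianization (Q : Subgroup H) := Abelianization.of with hϕ
  have ht := MonoidHom.transfer_eq_pow ϕ x key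
  have h1 : ϕ.transfer x = 1 :=
    Abelianization.commutator_subset_ker (MonoidHom.transfer ϕ) hx
  rw [ht] at h1
  have h2 : (⟨x ^ ι, MonoidHom.transfer_eq_pow_aux x key⟩ : (Q : Subgroup H)) ∈
      commutator ↥(Q : Subgroup H) := (QuotientGroup.eq_one_iff _).mp h1
  have hpι : ¬ p ∣ ι := Q.not_dvd_index
  have hco : Nat.Coprime (p ^ n) ι :=
    Nat.Coprime.pow_left n ((Nat.Prime.coprime_iff_not_dvd hp.out).mpr hpι)
  have hlt : 1 < p ^ n := by
    have hpos : 0 < p ^ n := pow_pos hp.out.pos n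
    have hne : p ^ n ≠ 1 := fun h => hx1 (orderOf_eq_one_iff.mp (hn.trans h))
    omega
  obtain ⟨k, -, hk⟩ := Nat.exists_mul_mod_eq_one_of_coprime hco.symm hlt
  have hx' : x = (x ^ ι) ^ k := by
    rw [← pow_mul, ← pow_mod_orderOf, hn, hk, pow_one]
  have h3 := Subgroup.pow_mem _ h2 k
  have h4 : x ∈ Subgroup.map (Q : Subgroup H).subtype (commutator ↥(Q : Subgroup H)) :=
    ⟨_, h3, by simp [hx'.symm]⟩
  rwa [_root_.commutator, Subgroup.map_commutator, ← MonoidHom.range_eq_map,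
    Subgroup.subtype_range] at h4

/-- A non-Schur element of a group `G` is an element `x` with
`x ∉ [C_G(x), C_G(x)]`. -/
def IsNonSchur {G : Type*} [Group G] (x : G) : Prop :=
  x ∉ ⁅Subgroup.centralizer {x}, Subgroup.centralizer {x}⁆

/-- A `p`-element is an element of `p`-power order. -/
def IsPElement (p : ℕ) {G : Type*} [Group G] (x : G) : Prop :=
  ∃ n : ℕ, orderOf x = p ^ n

theorem nonSchur_of_commutator_le_normal_psubgroup (p : ℕ) (hp : p.Prime) (G : Type*) [Group G]
    [Finite G] (P : Sylow p G) (N : Subgroup G) [N.Normal] (hN : IsPGroup p N)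
    (hPN : ⁅(P : Subgroup G), (P : Subgroup G)⁆ ≤ N) (hdvd : p ∣ Nat.card G) :
    ∃ x : G, IsPElement p x ∧ IsNonSchur x := by
  haveI : Fact p.Prime := ⟨hp⟩
  by_contra hcon
  push_neg at hcon
  -- Step A: the commutator of any Sylow p-subgroup lies in N
  have hA : ∀ P' : Sylow p G, ⁅(P' : Subgroup G), (P' : Subgroup G)⁆ ≤ N := by
    intro P'
    obtain ⟨g, hg⟩ := MulAction.exists_smul_eq G P P'
    rw [Subgroup.commutator_le]
    intro g₁ h₁ g₂ h₂
    rw [← hg] at h₁ h₂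
    have h₁' : (MulAut.conj g)⁻¹ • g₁ ∈ (P : Subgroup G) :=
      Subgroup.mem_pointwise_smul_iff_inv_smul_mem.mp h₁
    have h₂' : (MulAut.conj g)⁻¹ • g₂ ∈ (P : Subgroup G) :=
      Subgroup.mem_pointwise_smul_iff_inv_smul_mem.mp h₂
    have hmem : ⁅(MulAut.conj g)⁻¹ • g₁, (MulAut.conj g)⁻¹ • g₂⁆ ∈ N :=
      hPN (Subgroup.commutator_mem_commutator h₁' h₂')
    have hconj : g * ⁅(MulAut.conj g)⁻¹ • g₁, (MulAut.conj g)⁻¹ • g₂⁆ * g⁻¹ = ⁅g₁, g₂⁆ := by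
      simp only [MulAut.smul_def, MulAut.conj_inv_apply, commutatorElement_def]
      group
    have := ‹N.Normal›.conj_mem _ hmem g
    rwa [hconj] at this
  -- Step B: every p-element lies in the commutator of some Sylow p-subgroup
  have hB : ∀ x : G, IsPElement p x →
      ∃ P' : Sylow p G, x ∈ ⁅(P' : Subgroup G), (P' : Subgroup G)⁆ := by
    intro x hx
    have hxC : x ∈ Subgroup.centralizer {x} :=
      Subgroup.mem_centralizer_iff.mpr (by simp)
    have hSchur : x ∈ ⁅Subgroup.centralizer {x}, Subgroup.centralizer {x}⁆ :=
      not_not.mp (hcon x hx)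
    set C := Subgroup.centralizer {x} with hC
    have hmap : ⁅C, C⁆ = Subgroup.map C.subtype (_root_.commutator ↥C) := by
      rw [_root_.commutator, Subgroup.map_commutator, ← MonoidHom.range_eq_map,
        Subgroup.subtype_range]
    rw [hmap] at hSchur
    obtain ⟨y, hy, hyx⟩ := hSchur
    have hyval : (y : G) = x := hyx
    have hcomm : ∀ g : ↥C, g * y = y * g := by
      intro g
      have hg : (g : G) ∈ Subgroup.centralizer {x} := g.2
      have hgx := Subgroup.mem_centralizer_iff.mp hg x rfl
      apply Subtype.ext
      simp only [Subgroup.coe_mul, hyval]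
      exact hgx.symm
    have hyo : ∃ n, orderOf y = p ^ n := by
      obtain ⟨n, hn⟩ := hx
      refine ⟨n, ?_⟩
      rw [← orderOf_injective C.subtype C.subtype_injective y]
      simpa [hyval] using hn
    obtain ⟨Q⟩ : Nonempty (Sylow p ↥C) := inferInstance
    have hyQ := aux_transfer Q hcomm hyo hy
    have hxm : x ∈ Subgroup.map C.subtype ⁅(Q : Subgroup ↥C), (Q : Subgroup ↥C)⁆ :=
      ⟨y, hyQ, hyval⟩
    rw [Subgroup.map_commutator] at hxm
    have hR : IsPGroup p ((Q : Subgroup ↥C).map C.subtype) := Q.2.map _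
    obtain ⟨P', hP'⟩ := hR.exists_le_sylow
    exact ⟨P', Subgroup.commutator_mono hP' hP' hxm⟩
  -- every p-element lies in N
  have hBN : ∀ x : G, IsPElement p x → x ∈ N := by
    intro x hx
    obtain ⟨P', hP'⟩ := hB x hx
    exact hA P' hP'
  -- every element of P is a p-element
  have hPel : ∀ x ∈ (P : Subgroup G), IsPElement p x := by
    intro x hx
    obtain ⟨k, hk⟩ := IsPGroup.iff_orderOf.mp P.2 ⟨x, hx⟩
    refine ⟨k, ?_⟩
    rw [← hk, ← orderOf_injective (P : Subgroup G).subtype (P : Subgroup G).subtype_injective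
      ⟨x, hx⟩]
    rfl
  have hPleN : (P : Subgroup G) ≤ N := fun x hx => hBN x (hPel x hx)
  have hNleP : N ≤ (P : Subgroup G) := by
    obtain ⟨P'', hle⟩ := hN.exists_le_sylow
    obtain ⟨g, hg⟩ := MulAction.exists_smul_eq G P P''
    intro m hm
    have h1 : g * m * g⁻¹ ∈ N := ‹N.Normal›.conj_mem m hm g
    have h2 := hle h1
    rw [← hg] at h2
    have h3 : (MulAut.conj g)⁻¹ • (g * m * g⁻¹) ∈ (P : Subgroup G) :=
      Subgroup.mem_pointwise_smul_iff_inv_smul_mem.mp h2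
    have h4 : (MulAut.conj g)⁻¹ • (g * m * g⁻¹) = m := by
      simp only [MulAut.smul_def, MulAut.conj_inv_apply]
      group
    rwa [h4] at h3
  have hNPeq : N = (P : Subgroup G) := le_antisymm hNleP hPleN
  haveI hPnorm : (P : Subgroup G).Normal := hNPeq ▸ ‹N.Normal›
  have huniq : ∀ P' : Sylow p G, (P' : Subgroup G) = (P : Subgroup G) := by
    intro P'
    obtain ⟨g, hg⟩ := MulAction.exists_smul_eq G P P'
    rw [← hg, Sylow.smul_eq_of_normal]
  have hPle : (P : Subgroup G) ≤ ⁅(P : Subgroup G), (P : Subgroup G)⁆ := by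
    intro x hx
    obtain ⟨P', hP'⟩ := hB x (hPel x hx)
    rwa [huniq P'] at hP'
  have hcommP : ⁅(P : Subgroup G), (P : Subgroup G)⁆ = (P : Subgroup G) :=
    le_antisymm (Subgroup.commutator_le_left _ _) hPle
  have hmapP : Subgroup.map (P : Subgroup G).subtype (_root_.commutator ↥(P : Subgroup G)) =
      Subgroup.map (P : Subgroup G).subtype ⊤ := by
    rw [_root_.commutator, Subgroup.map_commutator, ← MonoidHom.range_eq_map,
      Subgroup.subtype_range, hcommP]
  have hcommTop : _root_.commutator ↥(P : Subgroup G) = ⊤ :=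
    Subgroup.map_injective (P : Subgroup G).subtype_injective hmapP
  haveI := P.2.isNilpotent
  have hts : ∀ m : ℕ, derivedSeries ↥(P : Subgroup G) m = ⊤ := by
    intro m
    induction m with
    | zero => exact derivedSeries_zero _
    | succ k ih => rw [derivedSeries_succ, ih, ← _root_.commutator_def, hcommTop]
  haveI hsolv : Group.IsSolvable ↥(P : Subgroup G) := inferInstance
  obtain ⟨m, hm⟩ := (isSolvable_def ↥(P : Subgroup G)).mp hsolv
  rw [hts m] at hm
  obtain ⟨g, hg⟩ := exists_prime_orderOf_dvd_card' (G := G) p hdvd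
  have hgP : g ∈ (P : Subgroup G) := hNPeq ▸ hBN g ⟨1, by rw [hg, pow_one]⟩
  have hmem : (⟨g, hgP⟩ : ↥(P : Subgroup G)) ∈ (⊤ : Subgroup ↥(P : Subgroup G)) := trivial
  rw [hm] at hmem
  have hg1 : g = 1 := congrArg Subtype.val (Subgroup.mem_bot.mp hmem)
  rw [hg1, orderOf_one] at hg
  exact hp.ne_one hg.symm
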